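/- arXiv:1808.06239 — 7 statements merged into one kernel-verified Lean document; each statement's English description precedes it below -/
import Mathlib

section
/- If s satisfies ‖∇f(x) + Bs + σ‖s‖s‖ ≤ θ‖∇f(x)‖ with ‖B‖ ≤ κ_B, σ > 0, θ ∈ [0,1) and ‖s‖ < 1, then ‖s‖ ≥ (1−θ)‖∇f(x)‖/(κ_B + σ). -/
open scoped RealInnerProductSpace

/-- Lower bound on the step length from the inexact model-gradient condition. -/
theorem arc_step_lower_bound {n : ℕ} (f : EuclideanSpace ℝ (Fin n) → ℝ)
    (x s : EuclideanSpace ℝ (Fin n))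
    (B : EuclideanSpace ℝ (Fin n) →L[ℝ] EuclideanSpace ℝ (Fin n))
    (hBsym : ∀ u v : EuclideanSpace ℝ (Fin n), ⟪B u, v⟫ = ⟪u, B v⟫)
    (κB σ θ : ℝ) (hκB : 0 ≤ κB) (hB : ‖B‖ ≤ κB) (hσ : 0 < σ)
    (hθ : θ ∈ Set.Ico (0:ℝ) 1) (hs : ‖s‖ < 1)
    (hstep : ‖gradient f x + B s + (σ * ‖s‖) • s‖ ≤ θ * ‖gradient f x‖) :
    ‖s‖ ≥ (1 - θ) * ‖gradient f x‖ / (κB + σ) := by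
  set g := gradient f x with hg
  have hpos : 0 < κB + σ := by linarith
  rw [ge_iff_le, div_le_iff₀ hpos]
  have htri : ‖g‖ ≤ ‖g + B s + (σ * ‖s‖) • s‖ + ‖B s + (σ * ‖s‖) • s‖ := by
    calc ‖g‖ = ‖(g + B s + (σ * ‖s‖) • s) - (B s + (σ * ‖s‖) • s)‖ := by rw [add_assoc, add_sub_cancel_right]
    _ ≤ _ := norm_sub_le _ _
  have hBs : ‖B s + (σ * ‖s‖) • s‖ ≤ (κB + σ) * ‖s‖ := by
    have h1 : ‖B s‖ ≤ κB * ‖s‖ :=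
      le_trans (B.le_opNorm s) (mul_le_mul_of_nonneg_right hB (norm_nonneg s))
    have h2 : ‖(σ * ‖s‖) • s‖ ≤ σ * ‖s‖ := by
      rw [norm_smul, Real.norm_eq_abs, abs_of_nonneg (by positivity)]
      calc σ * ‖s‖ * ‖s‖ ≤ σ * ‖s‖ * 1 :=
        mul_le_mul_of_nonneg_left hs.le (by positivity)
      _ = σ * ‖s‖ := by ring
    calc ‖B s + (σ * ‖s‖) • s‖ ≤ ‖B s‖ + ‖(σ * ‖s‖) • s‖ := norm_add_le _ _
    _ ≤ κB * ‖s‖ + σ * ‖s‖ := add_le_add h1 h2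
    _ = (κB + σ) * ‖s‖ := by ring
  nlinarith [norm_nonneg g, norm_nonneg s]
end

section
/- Suppose ‖∇f(x+s) − ∇f(x) − Bs‖ ≤ (M + L/2)‖s‖², ‖∇f(x) + Bs + σ‖s‖s‖ ≤ θ min(‖s‖², ‖∇f(x)‖), and σ ≤ σ_max. Then ‖∇f(x+s)‖ ≤ (M + L/2 + θ + σ_max)‖s‖², i.e., ‖s‖ ≥ sqrt(ζ‖∇f(x+s)‖) with ζ = 1/(M + L/2 + θ + σ_max). -/
open scoped RealInnerProductSpace

/-- Lower bound on the step length in terms of the gradient at the trial point, first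
inner stopping criterion. -/
theorem arc_step_vs_new_gradient_first {n : ℕ} (f : EuclideanSpace ℝ (Fin n) → ℝ)
    (x s : EuclideanSpace ℝ (Fin n))
    (B : EuclideanSpace ℝ (Fin n) →L[ℝ] EuclideanSpace ℝ (Fin n))
    (hBsym : ∀ u v : EuclideanSpace ℝ (Fin n), ⟪B u, v⟫ = ⟪u, B v⟫)
    (M L σ σmax θ : ℝ) (hM : 0 < M) (hL : 0 < L) (hσmax : 0 < σmax)
    (hσ : 0 < σ) (hσle : σ ≤ σmax) (hθ : θ ∈ Set.Ico (0:ℝ) 1)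
    (herr : ‖gradient f (x + s) - gradient f x - B s‖ ≤ (M + L/2) * ‖s‖^2)
    (hstep : ‖gradient f x + B s + (σ * ‖s‖) • s‖
      ≤ θ * min (‖s‖^2) ‖gradient f x‖) :
    ‖gradient f (x + s)‖ ≤ (M + L/2 + θ + σmax) * ‖s‖^2 ∧
    ‖s‖ ≥ Real.sqrt ((1/(M + L/2 + θ + σmax)) * ‖gradient f (x + s)‖) := by
  obtain ⟨hθ0, hθ1⟩ := hθ
  have hdecomp : gradient f (x + s)
      = (gradient f (x + s) - gradient f x - B s)
        + (gradient f x + B s + (σ * ‖s‖) • s) - (σ * ‖s‖) • s := by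
    abel
  have hσs : ‖(σ * ‖s‖) • s‖ ≤ σmax * ‖s‖^2 := by
    rw [norm_smul]
    have : ‖σ * ‖s‖‖ = σ * ‖s‖ := Real.norm_of_nonneg (by positivity)
    rw [this]
    have := norm_nonneg s
    nlinarith
  have hmid : ‖gradient f x + B s + (σ * ‖s‖) • s‖ ≤ θ * ‖s‖^2 := by
    calc _ ≤ θ * min (‖s‖^2) ‖gradient f x‖ := hstep
    _ ≤ θ * ‖s‖^2 := by
        apply mul_le_mul_of_nonneg_left (min_le_left _ _) hθ0
  have hmain : ‖gradient f (x + s)‖ ≤ (M + L/2 + θ + σmax) * ‖s‖^2 := by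
    calc ‖gradient f (x + s)‖
        = ‖(gradient f (x + s) - gradient f x - B s)
            + (gradient f x + B s + (σ * ‖s‖) • s) - (σ * ‖s‖) • s‖ := by
          rw [← hdecomp]
      _ ≤ ‖(gradient f (x + s) - gradient f x - B s)
            + (gradient f x + B s + (σ * ‖s‖) • s)‖ + ‖(σ * ‖s‖) • s‖ :=
          norm_sub_le _ _
      _ ≤ (‖gradient f (x + s) - gradient f x - B s‖
            + ‖gradient f x + B s + (σ * ‖s‖) • s‖) + ‖(σ * ‖s‖) • s‖ := by
          gcongr; exact norm_add_le _ _
      _ ≤ ((M + L/2) * ‖s‖^2 + θ * ‖s‖^2) + σmax * ‖s‖^2 := by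
          gcongr
      _ = (M + L/2 + θ + σmax) * ‖s‖^2 := by ring
  refine ⟨hmain, ?_⟩
  have hden : 0 < M + L/2 + θ + σmax := by linarith
  have h1 : (1/(M + L/2 + θ + σmax)) * ‖gradient f (x + s)‖ ≤ ‖s‖^2 := by
    rw [div_mul_eq_mul_div, one_mul, div_le_iff₀ hden]
    linarith [hmain]
  calc Real.sqrt ((1/(M + L/2 + θ + σmax)) * ‖gradient f (x + s)‖)
      ≤ Real.sqrt (‖s‖^2) := Real.sqrt_le_sqrt h1
    _ = ‖s‖ := Real.sqrt_sq (norm_nonneg s)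
end

section
/- Suppose ‖∇f(x+s) − ∇f(x) − Bs‖ ≤ (M + L/2)‖s‖², ‖∇²f(x+βs)‖ ≤ κ_H for β ∈ [0,1], ‖∇f(x) + Bs + σ‖s‖s‖ ≤ θ min(1,‖s‖)‖∇f(x)‖ with θ ∈ (0,1), and σ ≤ σ_max. Then (1−θ)‖∇f(x+s)‖ ≤ (M + L/2 + θκ_H + σ_max)‖s‖². -/
open scoped RealInnerProductSpace

/-- Lower bound on the step length in terms of the gradient at the trial point, second
inner stopping criterion, under a uniform Hessian bound along the segment. -/
theorem arc_step_vs_new_gradient_second {n : ℕ} (f : EuclideanSpace ℝ (Fin n) → ℝ)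
    (x s : EuclideanSpace ℝ (Fin n)) (hf : ContDiff ℝ 2 f)
    (B : EuclideanSpace ℝ (Fin n) →L[ℝ] EuclideanSpace ℝ (Fin n))
    (hBsym : ∀ u v : EuclideanSpace ℝ (Fin n), ⟪B u, v⟫ = ⟪u, B v⟫)
    (M L κH σ σmax θ : ℝ) (hM : 0 < M) (hL : 0 < L) (hκH : 0 < κH)
    (hσmax : 0 < σmax) (hσ : 0 < σ) (hσle : σ ≤ σmax) (hθ : θ ∈ Set.Ioo (0:ℝ) 1)
    (herr : ‖gradient f (x + s) - gradient f x - B s‖ ≤ (M + L/2) * ‖s‖^2)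
    (hH : ∀ β : ℝ, β ∈ Set.Icc (0:ℝ) 1 →
      ‖fderiv ℝ (gradient f) (x + β • s)‖ ≤ κH)
    (hstep : ‖gradient f x + B s + (σ * ‖s‖) • s‖
      ≤ θ * min 1 ‖s‖ * ‖gradient f x‖) :
    (1 - θ) * ‖gradient f (x + s)‖ ≤ (M + L/2 + θ*κH + σmax) * ‖s‖^2 := by
  obtain ⟨hθ0, hθ1⟩ := hθ
  set g1 := gradient f x
  set g2 := gradient f (x + s)
  have hgdiff : Differentiable ℝ (gradient f) := by
    have h1 : ContDiff ℝ 1 (fderiv ℝ f) := hf.fderiv_right (by norm_num)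
    have : gradient f = fun y =>
        (InnerProductSpace.toDual ℝ (EuclideanSpace ℝ (Fin n))).symm (fderiv ℝ f y) := rfl
    rw [this]
    exact ((InnerProductSpace.toDual ℝ (EuclideanSpace ℝ (Fin n))).symm.toContinuousLinearEquiv
      : _ ≃L[ℝ] _).differentiable.comp (h1.differentiable one_ne_zero)
  -- mean value bound: ‖g1‖ ≤ ‖g2‖ + κH * ‖s‖
  have hmv : ‖g2 - g1‖ ≤ κH * ‖(x + s) - x‖ := by
    apply Convex.norm_image_sub_le_of_norm_fderiv_le
      (fun y _ => (hgdiff y)) ?_ (convex_segment x (x + s)) ?_ ?_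
    · intro y hy
      obtain ⟨a, b, ha, hb, hab, rfl⟩ := hy
      have : a • x + b • (x + s) = x + b • s := by
        rw [smul_add, ← add_assoc, ← add_smul, hab, one_smul]
      rw [this]
      exact hH b ⟨hb, by linarith⟩
    · exact left_mem_segment ℝ x (x + s)
    · exact right_mem_segment ℝ x (x + s)
  have hmv' : ‖g1‖ ≤ ‖g2‖ + κH * ‖s‖ := by
    have : ‖g1‖ - ‖g2‖ ≤ ‖g2 - g1‖ := by
      have := norm_sub_norm_le g2 g1; linarith [abs_le.mp (abs_norm_sub_norm_le g2 g1)]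
    have hxs : ‖(x + s) - x‖ = ‖s‖ := by simp
    rw [hxs] at hmv
    linarith
  have hs0 : (0:ℝ) ≤ ‖s‖ := norm_nonneg s
  have hmin1 : min 1 ‖s‖ ≤ 1 := min_le_left _ _
  have hmins : min 1 ‖s‖ * ‖s‖ ≤ ‖s‖ ^ 2 := by
    have := min_le_right 1 ‖s‖
    nlinarith
  have hmin0 : 0 ≤ min 1 ‖s‖ := le_min (by norm_num) hs0
  -- main decomposition
  have hdecomp : ‖g2‖ ≤ (M + L/2) * ‖s‖^2 + θ * min 1 ‖s‖ * ‖g1‖ + σ * ‖s‖^2 := by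
    have : g2 = (g2 - g1 - B s) + (g1 + B s + (σ * ‖s‖) • s) - (σ * ‖s‖) • s := by abel
    calc ‖g2‖ = ‖(g2 - g1 - B s) + (g1 + B s + (σ * ‖s‖) • s) - (σ * ‖s‖) • s‖ := by rw [← this]
    _ ≤ ‖(g2 - g1 - B s) + (g1 + B s + (σ * ‖s‖) • s)‖ + ‖(σ * ‖s‖) • s‖ :=
        norm_sub_le _ _
    _ ≤ ‖g2 - g1 - B s‖ + ‖g1 + B s + (σ * ‖s‖) • s‖ + ‖(σ * ‖s‖) • s‖ := by
        linarith [norm_add_le (g2 - g1 - B s) (g1 + B s + (σ * ‖s‖) • s)]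
    _ ≤ (M + L/2) * ‖s‖^2 + θ * min 1 ‖s‖ * ‖g1‖ + σ * ‖s‖^2 := by
        have h3 : ‖(σ * ‖s‖) • s‖ = σ * ‖s‖^2 := by
          rw [norm_smul, Real.norm_eq_abs, abs_of_nonneg (by positivity)]
          ring
        rw [h3] at *
        linarith
  -- combine
  have key : θ * min 1 ‖s‖ * ‖g1‖ ≤ θ * ‖g2‖ + θ * κH * ‖s‖^2 := by
    have h1 : θ * min 1 ‖s‖ * ‖g1‖ ≤ θ * min 1 ‖s‖ * (‖g2‖ + κH * ‖s‖) := by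
      apply mul_le_mul_of_nonneg_left hmv' (by positivity)
    have h2 : θ * min 1 ‖s‖ * (‖g2‖ + κH * ‖s‖)
        ≤ θ * ‖g2‖ + θ * κH * ‖s‖^2 := by
      have hg2 : (0:ℝ) ≤ ‖g2‖ := norm_nonneg _
      nlinarith [mul_le_mul_of_nonneg_left hmins (mul_nonneg hθ0.le hκH.le),
        mul_le_mul_of_nonneg_right (mul_le_mul_of_nonneg_left hmin1 hθ0.le) hg2]
    linarith
  nlinarith [norm_nonneg g2, sq_nonneg ‖s‖]
end

section
/- Let f be bounded below by f_low and suppose that at each of k successful steps, f(x_j) − f(x_{j+1}) ≥ κ_s⁻¹‖∇f(x_{j+1})‖^{3/2} and ‖∇f(x_{j+1})‖ > ε, while f does not increase elsewhere. Then the number of such successful steps is at most ⌊κ_s(f(x₀) − f_low)/ε^{3/2}⌋. -/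
/-- Counting argument for the `O(ε^{-3/2})` first-order complexity bound: the number of
successful steps, on each of which the objective decreases by at least
`κ_s⁻¹‖∇f(x_{j+1})‖^{3/2}` with `‖∇f(x_{j+1})‖ > ε`, is at most
`⌊κ_s (f(x₀) − f_low)/ε^{3/2}⌋`. -/
theorem arc_successful_iteration_count {n : ℕ} (f : EuclideanSpace ℝ (Fin n) → ℝ)
    (x : ℕ → EuclideanSpace ℝ (Fin n)) (flow κs ε : ℝ)
    (hκs : 0 < κs) (hε : 0 < ε)
    (hlow : ∀ y, flow ≤ f y)
    (S : Finset ℕ)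
    (hmono : ∀ j, f (x (j+1)) ≤ f (x j))
    (hsucc : ∀ j ∈ S,
      f (x j) - f (x (j+1)) ≥ κs⁻¹ * ‖gradient f (x (j+1))‖^((3:ℝ)/2) ∧
      ‖gradient f (x (j+1))‖ > ε) :
    S.card ≤ ⌊κs * (f (x 0) - flow) / ε^((3:ℝ)/2)⌋₊ := by
  have hεp : (0:ℝ) < ε ^ ((3:ℝ)/2) := Real.rpow_pos_of_pos hε _
  have hdrop : ∀ j ∈ S, κs⁻¹ * ε ^ ((3:ℝ)/2) ≤ f (x j) - f (x (j+1)) := by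
    intro j hj
    obtain ⟨h1, h2⟩ := hsucc j hj
    refine le_trans ?_ h1
    have : ε ^ ((3:ℝ)/2) ≤ ‖gradient f (x (j+1))‖ ^ ((3:ℝ)/2) :=
      Real.rpow_le_rpow hε.le h2.le (by norm_num)
    exact mul_le_mul_of_nonneg_left this (inv_nonneg.mpr hκs.le)
  -- sum of drops over S bounded by total decrease
  obtain ⟨N, hN⟩ : ∃ N, S ⊆ Finset.range N := ⟨S.sup id + 1, fun j hj =>
    Finset.mem_range.mpr (Nat.lt_succ_of_le (Finset.le_sup (f := id) hj))⟩
  have hsum : (S.card : ℝ) * (κs⁻¹ * ε ^ ((3:ℝ)/2)) ≤ f (x 0) - flow := by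
    calc (S.card : ℝ) * (κs⁻¹ * ε ^ ((3:ℝ)/2))
        ≤ ∑ j ∈ S, (f (x j) - f (x (j+1))) := by
          rw [← nsmul_eq_mul]
          exact Finset.card_nsmul_le_sum S _ _ hdrop
      _ ≤ ∑ j ∈ Finset.range N, (f (x j) - f (x (j+1))) :=
          Finset.sum_le_sum_of_subset_of_nonneg hN
            (fun j _ _ => sub_nonneg.mpr (hmono j))
      _ = f (x 0) - f (x N) := Finset.sum_range_sub' (fun i => f (x i)) N
      _ ≤ f (x 0) - flow := by linarith [hlow (x N)]
  refine Nat.le_floor ?_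
  rw [le_div_iff₀ hεp]
  have h2 := mul_le_mul_of_nonneg_left hsum hκs.le
  calc (S.card : ℝ) * ε ^ ((3:ℝ)/2)
      = κs * ((S.card : ℝ) * (κs⁻¹ * ε ^ ((3:ℝ)/2))) := by
        field_simp
    _ ≤ κs * (f (x 0) - flow) := h2
end

section
/- Suppose a sequence (σ_k) with σ₀ > 0 satisfies σ_{j+1} ≥ γ₁σ_j on successful iterations, σ_{j+1} ≥ γ₂σ_j on unsuccessful iterations of type 1, σ_{j+1} = σ_j on unsuccessful iterations of type 2, and σ_k ≤ σ_max for all k, with 0 < γ₁ < 1 < γ₂. Then the number |U₁| of type-1 unsuccessful iterations among the first k satisfies |U₁| ≤ |S|·|log γ₁|/log γ₂ + (1/log γ₂)·log(σ_max/σ₀), where |S| is the number of successful iterations. -/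
/-- Bound on the number of type-1 unsuccessful iterations of the ARC algorithm in terms
of the number of successful iterations. -/
theorem arc_unsuccessful_iteration_count (σ : ℕ → ℝ) (σmax γ₁ γ₂ : ℝ) (k : ℕ)
    (S U₁ U₂ : Finset ℕ)
    (hγ₁ : 0 < γ₁) (hγ₁1 : γ₁ < 1) (hγ₂ : 1 < γ₂)
    (hpos : ∀ j, 0 < σ j) (hσmax : σ k ≤ σmax)
    (hpart : ∀ j ∈ Finset.range k, (j ∈ S ∧ j ∉ U₁ ∧ j ∉ U₂) ∨
      (j ∉ S ∧ j ∈ U₁ ∧ j ∉ U₂) ∨ (j ∉ S ∧ j ∉ U₁ ∧ j ∈ U₂))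
    (hSsub : S ⊆ Finset.range k) (hU₁sub : U₁ ⊆ Finset.range k)
    (hU₂sub : U₂ ⊆ Finset.range k)
    (hS : ∀ j ∈ S, σ (j+1) ≥ γ₁ * σ j)
    (hU₁ : ∀ j ∈ U₁, σ (j+1) ≥ γ₂ * σ j)
    (hU₂ : ∀ j ∈ U₂, σ (j+1) = σ j) :
    (U₁.card : ℝ) ≤ S.card * |Real.log γ₁| / Real.log γ₂
      + (1 / Real.log γ₂) * Real.log (σmax / σ 0) := by
  have hγ₂0 : (0:ℝ) < γ₂ := lt_trans one_pos hγ₂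
  -- key inequality by induction
  have key : ∀ n ≤ k,
      σ 0 * γ₁ ^ (S ∩ Finset.range n).card * γ₂ ^ (U₁ ∩ Finset.range n).card ≤ σ n := by
    intro n hn
    induction n with
    | zero => simp
    | succ m ih =>
      have hm : m ≤ k := Nat.le_of_succ_le hn
      have ihm := ih hm
      have hmk : m < k := hn
      have hr1 : Finset.range (m+1) = insert m (Finset.range m) := Finset.range_add_one
      have hmnot : m ∉ Finset.range m := by simp
      rcases hpart m (Finset.mem_range.mpr hmk) with ⟨h1, h2, _⟩ | ⟨h1, h2, _⟩ | ⟨h1, h2, h3⟩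
      · have hScard : (S ∩ Finset.range (m+1)).card = (S ∩ Finset.range m).card + 1 := by
          rw [hr1, Finset.inter_insert_of_mem h1]
          exact Finset.card_insert_of_notMem (by simp)
        have hUcard : (U₁ ∩ Finset.range (m+1)) = U₁ ∩ Finset.range m := by
          rw [hr1, Finset.inter_insert_of_notMem h2]
        rw [hScard, hUcard, pow_succ]
        calc σ 0 * (γ₁ ^ (S ∩ Finset.range m).card * γ₁) * γ₂ ^ (U₁ ∩ Finset.range m).card
            = γ₁ * (σ 0 * γ₁ ^ (S ∩ Finset.range m).card * γ₂ ^ (U₁ ∩ Finset.range m).card) := by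
              ring
          _ ≤ γ₁ * σ m := by
              exact mul_le_mul_of_nonneg_left ihm hγ₁.le
          _ ≤ σ (m+1) := hS m h1
      · have hScard : (S ∩ Finset.range (m+1)) = S ∩ Finset.range m := by
          rw [hr1, Finset.inter_insert_of_notMem h1]
        have hUcard : (U₁ ∩ Finset.range (m+1)).card = (U₁ ∩ Finset.range m).card + 1 := by
          rw [hr1, Finset.inter_insert_of_mem h2]
          exact Finset.card_insert_of_notMem (by simp)
        rw [hScard, hUcard, pow_succ]
        calc σ 0 * γ₁ ^ (S ∩ Finset.range m).card * (γ₂ ^ (U₁ ∩ Finset.range m).card * γ₂)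
            = γ₂ * (σ 0 * γ₁ ^ (S ∩ Finset.range m).card * γ₂ ^ (U₁ ∩ Finset.range m).card) := by
              ring
          _ ≤ γ₂ * σ m := mul_le_mul_of_nonneg_left ihm hγ₂0.le
          _ ≤ σ (m+1) := hU₁ m h2
      · have hScard : (S ∩ Finset.range (m+1)) = S ∩ Finset.range m := by
          rw [hr1, Finset.inter_insert_of_notMem h1]
        have hUcard : (U₁ ∩ Finset.range (m+1)) = U₁ ∩ Finset.range m := by
          rw [hr1, Finset.inter_insert_of_notMem h2]
        rw [hScard, hUcard, hU₂ m h3]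
        exact ihm
  have hSk : S ∩ Finset.range k = S := Finset.inter_eq_left.mpr hSsub
  have hUk : U₁ ∩ Finset.range k = U₁ := Finset.inter_eq_left.mpr hU₁sub
  have hkey := key k le_rfl
  rw [hSk, hUk] at hkey
  have hmain : σ 0 * γ₁ ^ S.card * γ₂ ^ U₁.card ≤ σmax := le_trans hkey hσmax
  have h0 : 0 < σ 0 := hpos 0
  have hlog : Real.log (σ 0) + S.card * Real.log γ₁ + U₁.card * Real.log γ₂
      ≤ Real.log σmax := by
    have hposl : 0 < σ 0 * γ₁ ^ S.card * γ₂ ^ U₁.card := by positivity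
    have := Real.log_le_log (by positivity) hmain
    rw [Real.log_mul (by positivity) (by positivity),
        Real.log_mul (by positivity) (by positivity),
        Real.log_pow, Real.log_pow] at this
    linarith
  have hlogγ₂ : 0 < Real.log γ₂ := Real.log_pos hγ₂
  have hlogγ₁ : Real.log γ₁ < 0 := Real.log_neg hγ₁ hγ₁1
  have habs : |Real.log γ₁| = -Real.log γ₁ := abs_of_neg hlogγ₁
  have hσmax0 : 0 < σmax := lt_of_lt_of_le (hpos k) hσmax
  have hdiv : Real.log (σmax / σ 0) = Real.log σmax - Real.log (σ 0) :=
    Real.log_div (ne_of_gt hσmax0) (ne_of_gt h0)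
  rw [habs, hdiv]
  rw [div_add' _ _ _ (ne_of_gt hlogγ₂)]
  · rw [le_div_iff₀ hlogγ₂]
    have : (U₁.card : ℝ) * Real.log γ₂ ≤ Real.log σmax - Real.log (σ 0)
        - S.card * Real.log γ₁ := by linarith
    calc (U₁.card : ℝ) * Real.log γ₂
        ≤ Real.log σmax - Real.log (σ 0) - S.card * Real.log γ₁ := this
      _ = S.card * -Real.log γ₁ + 1 / Real.log γ₂ * (Real.log σmax - Real.log (σ 0))
            * Real.log γ₂ := by field_simp; ring
end

section
/- Let f be bounded below by f_low and suppose at every successful iteration f(x_j) − f(x_{j+1}) ≥ η₁(σ_min/3)‖s_j‖³, with f nonincreasing along the whole sequence. Then the number of successful iterations with ‖s_j‖ ≥ 1 is at most ⌊(3/(η₁σ_min))(f(x₀) − f_low)⌋, and Σ_{j successful}‖s_j‖³ < ∞, so ‖s_j‖ → 0 along successful iterations. -/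
open Filter

/-- If on every successful iteration the decrease is at least `η₁(σ_min/3)‖s_j‖³`, then
the number of successful iterations with `‖s_j‖ ≥ 1` is at most
`⌊(3/(η₁σ_min))(f(x₀) − f_low)⌋`, the series `Σ‖s_j‖³` over successful iterations
converges, and `‖s_j‖ → 0` along successful iterations. -/
theorem arc_step_summability {n : ℕ} (f : EuclideanSpace ℝ (Fin n) → ℝ)
    (x s : ℕ → EuclideanSpace ℝ (Fin n)) (flow η₁ σmin : ℝ)
    (hη₁ : η₁ ∈ Set.Ioo (0:ℝ) 1) (hσmin : 0 < σmin)
    (hlow : ∀ y, flow ≤ f y)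
    (S : Set ℕ)
    (hsucc : ∀ j ∈ S, x (j+1) = x j + s j ∧
      f (x j) - f (x (j+1)) ≥ η₁ * (σmin/3) * ‖s j‖^3)
    (hunsucc : ∀ j ∉ S, x (j+1) = x j) :
    (∀ T : Finset ℕ, (∀ j ∈ T, j ∈ S ∧ 1 ≤ ‖s j‖) →
      T.card ≤ ⌊3 / (η₁ * σmin) * (f (x 0) - flow)⌋₊) ∧
    Summable (S.indicator fun j => ‖s j‖^3) ∧
    Tendsto (fun j => ‖s j‖) (atTop ⊓ 𝓟 S) (nhds 0) := by
  obtain ⟨hη₁0, hη₁1⟩ := hη₁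
  set c : ℝ := η₁ * (σmin / 3) with hc
  have hc0 : 0 < c := by positivity
  -- partial sums bound
  have key : ∀ N : ℕ, ∑ j ∈ Finset.range N, S.indicator (fun j => c * ‖s j‖^3) j
      ≤ f (x 0) - f (x N) := by
    intro N
    induction N with
    | zero => simp
    | succ N ih =>
      rw [Finset.sum_range_succ]
      by_cases hN : N ∈ S
      · have h := (hsucc N hN).2
        rw [Set.indicator_of_mem hN]
        linarith
      · rw [Set.indicator_of_notMem hN, hunsucc N hN]
        linarith
  have key' : ∀ N : ℕ, ∑ j ∈ Finset.range N, S.indicator (fun j => c * ‖s j‖^3) j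
      ≤ f (x 0) - flow := fun N => le_trans (key N) (by linarith [hlow (x N)])
  have hnonneg : ∀ j, 0 ≤ S.indicator (fun j => c * ‖s j‖^3) j := by
    intro j
    apply Set.indicator_nonneg
    intro j _
    positivity
  have hsum : Summable (S.indicator fun j => c * ‖s j‖^3) :=
    summable_of_sum_range_le hnonneg key'
  have hsum2 : Summable (S.indicator fun j => ‖s j‖^3) := by
    have := hsum.mul_left c⁻¹
    convert this using 1
    · rfl
    funext j
    rw [← Set.indicator_const_mul]
    congr 1
    funext k
    field_simp
  refine ⟨?_, hsum2, ?_⟩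
  · intro T hT
    have hcard : (T.card : ℝ) * c ≤ f (x 0) - flow := by
      have h1 : ∀ j ∈ T, c ≤ S.indicator (fun j => c * ‖s j‖^3) j := by
        intro j hj
        obtain ⟨hjS, hjn⟩ := hT j hj
        rw [Set.indicator_of_mem hjS]
        have h3 : 1 ≤ ‖s j‖ ^ 3 := one_le_pow₀ hjn
        nlinarith
      calc (T.card : ℝ) * c = ∑ _j ∈ T, c := by rw [Finset.sum_const, nsmul_eq_mul]
        _ ≤ ∑ j ∈ T, S.indicator (fun j => c * ‖s j‖^3) j := Finset.sum_le_sum h1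
        _ ≤ ∑ j ∈ Finset.range (T.sup id + 1), S.indicator (fun j => c * ‖s j‖^3) j := by
            apply Finset.sum_le_sum_of_subset_of_nonneg
            · intro j hj
              exact Finset.mem_range.mpr (Nat.lt_succ_of_le (Finset.le_sup (f := id) hj))
            · intro j _ _; exact hnonneg j
        _ ≤ f (x 0) - flow := key' _
    apply Nat.le_floor
    rw [div_mul_eq_mul_div, le_div_iff₀ (by positivity)]
    calc (T.card : ℝ) * (η₁ * σmin) = (T.card : ℝ) * c * 3 := by ring
      _ ≤ (f (x 0) - flow) * 3 := by linarith
      _ = 3 * (f (x 0) - flow) := by ring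
  · -- tendsto
    have h0 : Tendsto (S.indicator fun j => ‖s j‖^3) atTop (nhds 0) :=
      hsum2.tendsto_atTop_zero
    have h1 : Tendsto (fun j => ‖s j‖^3) (atTop ⊓ 𝓟 S) (nhds 0) := by
      apply (h0.mono_left inf_le_left).congr'
      rw [EventuallyEq, eventually_inf_principal]
      exact Eventually.of_forall fun j hj => Set.indicator_of_mem hj _
    have h2 : Tendsto (fun j => (‖s j‖^3) ^ ((1:ℝ)/3)) (atTop ⊓ 𝓟 S) (nhds 0) := by
      have hcont : ContinuousAt (fun y : ℝ => y ^ ((1:ℝ)/3)) 0 :=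
        Real.continuousAt_rpow_const 0 ((1:ℝ)/3) (Or.inr (by norm_num))
      have := hcont.tendsto.comp h1
      simpa [Function.comp_def, Real.zero_rpow (by norm_num : ((1:ℝ)/3) ≠ 0)] using this
    apply h2.congr
    intro j
    rw [← Real.rpow_natCast ‖s j‖ 3, ← Real.rpow_mul (norm_nonneg _)]
    norm_num
end

section
/- Suppose B is symmetric with smallest eigenvalue λ_min(B) ≥ λ > 0, σ > 0, and s satisfies ‖∇f(x) + Bs + σ‖s‖s‖ ≤ θ‖∇f(x)‖ with θ ∈ [0,1). Then ‖s‖ ≤ ((1+θ)/λ)‖∇f(x)‖. -/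
open scoped RealInnerProductSpace

/-- Upper bound on the step length when the Hessian approximation is uniformly positive
definite: if `λ_min(B) ≥ λ > 0` and `s` satisfies the model-gradient condition, then
`‖s‖ ≤ ((1+θ)/λ)‖∇f(x)‖`. -/
theorem arc_step_upper_bound {n : ℕ} (f : EuclideanSpace ℝ (Fin n) → ℝ)
    (x s : EuclideanSpace ℝ (Fin n))
    (B : EuclideanSpace ℝ (Fin n) →L[ℝ] EuclideanSpace ℝ (Fin n))
    (hBsym : ∀ u v : EuclideanSpace ℝ (Fin n), ⟪B u, v⟫ = ⟪u, B v⟫)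
    (lam σ θ : ℝ) (hlam : 0 < lam)
    (hpd : ∀ v : EuclideanSpace ℝ (Fin n), ⟪B v, v⟫ ≥ lam * ‖v‖^2)
    (hσ : 0 < σ) (hθ : θ ∈ Set.Ico (0:ℝ) 1)
    (hstep : ‖gradient f x + B s + (σ * ‖s‖) • s‖ ≤ θ * ‖gradient f x‖) :
    ‖s‖ ≤ (1 + θ)/lam * ‖gradient f x‖ := by
  set g := gradient f x with hg
  set r := g + B s + (σ * ‖s‖) • s with hr
  by_cases hs : s = 0
  · simp [hs]
    have : 0 ≤ (1 + θ)/lam * ‖g‖ := by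
      apply mul_nonneg (div_nonneg (by linarith [hθ.1]) hlam.le) (norm_nonneg _)
    simpa [hs] using this
  have hsn : 0 < ‖s‖ := norm_pos_iff.mpr hs
  have key : lam * ‖s‖^2 ≤ ⟪r - g, s⟫ := by
    have : r - g = B s + (σ * ‖s‖) • s := by rw [hr]; abel
    rw [this, inner_add_left, real_inner_smul_left, real_inner_self_eq_norm_sq]
    have h1 : lam * ‖s‖^2 ≤ ⟪B s, s⟫ := hpd s
    have h2 : 0 ≤ σ * ‖s‖ * ‖s‖^2 := by positivity
    linarith
  have hub : ⟪r - g, s⟫ ≤ (1 + θ) * ‖g‖ * ‖s‖ := by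
    calc ⟪r - g, s⟫ ≤ ‖r - g‖ * ‖s‖ := real_inner_le_norm _ _
    _ ≤ (‖r‖ + ‖g‖) * ‖s‖ := by
        gcongr
        exact (norm_sub_le _ _)
    _ ≤ (θ * ‖g‖ + ‖g‖) * ‖s‖ := by gcongr
    _ = (1 + θ) * ‖g‖ * ‖s‖ := by ring
  have : lam * ‖s‖ ≤ (1 + θ) * ‖g‖ := by
    have := key.trans hub
    nlinarith
  rw [div_mul_eq_mul_div, le_div_iff₀ hlam]
  linarith
end
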